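/- arXiv:2402.00592 — 5 statements merged into one kernel-verified Lean document; each statement's English description precedes it below -/
import Mathlib

section
/- Let m be a basic probability assignment on a finite nonempty label set 𝒴, let s̃ ⊆ 𝒴 be nonempty, and let ỹ ∈ s̃. If bel({ỹ}) > 1/2, then the set { y ∈ 𝒴 : pl({y}) ≥ max_{y' ∈ s̃} bel({y'}) } equals the singleton {ỹ}; that is, ỹ is a confident prediction. -/
/-- Belief function of a basic probability assignment: `bel m A = ∑_{B ⊆ A} m B`. -/
noncomputable def bel {𝒴 : Type*} [DecidableEq 𝒴] (m : Finset 𝒴 → ℝ) (A : Finset 𝒴) : ℝ :=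
  ∑ B ∈ A.powerset, m B

/-- Plausibility function of a basic probability assignment:
`pl m A = ∑_{B ⊆ 𝒴, A ∩ B ≠ ∅} m B`. -/
noncomputable def pl {𝒴 : Type*} [Fintype 𝒴] [DecidableEq 𝒴] (m : Finset 𝒴 → ℝ)
    (A : Finset 𝒴) : ℝ :=
  ∑ B ∈ Finset.univ.filter (fun B => (A ∩ B).Nonempty), m B

/-- If `bel({y₀}) > 1/2` for some `y₀` in the candidate set `s`, then
`{ y ∈ 𝒴 : pl({y}) ≥ max_{y' ∈ s} bel({y'}) } = {y₀}`, i.e. `y₀` is a confident prediction. -/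
theorem confident_of_bel_gt_half {𝒴 : Type*} [Fintype 𝒴] [DecidableEq 𝒴] [Nonempty 𝒴]
    (m : Finset 𝒴 → ℝ)
    (hm_nonneg : ∀ A : Finset 𝒴, 0 ≤ m A)
    (hm_le_one : ∀ A : Finset 𝒴, m A ≤ 1)
    (hm_empty : m ∅ = 0)
    (hm_sum : ∑ A : Finset 𝒴, m A = 1)
    (s : Finset 𝒴) (hs : s.Nonempty) (y₀ : 𝒴) (hy₀ : y₀ ∈ s)
    (hbel : 1 / 2 < bel m {y₀}) :
    Finset.univ.filter
        (fun y => s.sup' hs (fun y' => bel m {y'}) ≤ pl m {y}) = {y₀} := by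
  have hbelsing : ∀ y : 𝒴, bel m {y} = m {y} := by
    intro y
    have hp : ({y} : Finset 𝒴).powerset = {∅, {y}} := by
      ext B; simp [Finset.subset_singleton_iff]
    rw [bel, hp, Finset.sum_pair (Finset.singleton_ne_empty y).symm, hm_empty, zero_add]
  have hy0half : 1 / 2 < m {y₀} := by rwa [hbelsing] at hbel
  have hpl0 : m {y₀} ≤ pl m {y₀} := by
    apply Finset.single_le_sum (f := m) (fun i _ => hm_nonneg i)
    simp
  have hplne : ∀ y : 𝒴, y ≠ y₀ → pl m {y} ≤ 1 - m {y₀} := by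
    intro y hy
    have hnotmem : ({y₀} : Finset 𝒴) ∉
        Finset.univ.filter (fun B => (({y} : Finset 𝒴) ∩ B).Nonempty) := by
      simp only [Finset.mem_filter, Finset.mem_univ, true_and]
      rintro ⟨a, ha⟩
      simp only [Finset.mem_inter, Finset.mem_singleton] at ha
      exact hy (ha.1 ▸ ha.2 ▸ rfl)
    have hsub : insert ({y₀} : Finset 𝒴)
        (Finset.univ.filter (fun B => (({y} : Finset 𝒴) ∩ B).Nonempty)) ⊆ Finset.univ := by
      intro x _; exact Finset.mem_univ x
    have h := Finset.sum_le_sum_of_subset_of_nonneg hsub (fun i _ _ => hm_nonneg i)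
    rw [Finset.sum_insert hnotmem, hm_sum] at h
    unfold pl
    linarith
  have hmy' : ∀ y' : 𝒴, y' ≠ y₀ → m {y'} ≤ 1 - m {y₀} := by
    intro y' hy'
    have hne : ({y'} : Finset 𝒴) ≠ {y₀} := by simp [hy']
    have hsub : ({({y'} : Finset 𝒴), {y₀}} : Finset (Finset 𝒴)) ⊆ Finset.univ := by
      intro x _; exact Finset.mem_univ x
    have h := Finset.sum_le_sum_of_subset_of_nonneg hsub (fun i _ _ => hm_nonneg i)
    rw [Finset.sum_pair hne, hm_sum] at h
    linarith
  have hsup_le : s.sup' hs (fun y' => bel m {y'}) ≤ pl m {y₀} := by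
    apply Finset.sup'_le
    intro y' _
    rw [hbelsing]
    by_cases h : y' = y₀
    · exact h ▸ hpl0
    · have := hmy' y' h; linarith
  have hle_sup : bel m {y₀} ≤ s.sup' hs (fun y' => bel m {y'}) :=
    Finset.le_sup' (fun y' => bel m {y'}) hy₀
  ext y
  simp only [Finset.mem_filter, Finset.mem_univ, true_and, Finset.mem_singleton]
  constructor
  · intro h
    by_contra hne
    have h1 := hplne y hne
    rw [hbelsing] at hle_sup
    linarith
  · intro h; subst h; exact hsup_le
end

section
/- For all integers l ≥ 3, k' ≥ 1, i, and j_1, …, j_{l−2} with 0 ≤ i ≤ j_a < k' for every a ∈ {1,…,l−2}, the following inequality of integers holds: C(k', i) · ∏_{a=1}^{l−2} C(k', j_a) ≥ Σ_{b=1}^{i} (−1)^{b+1} · C(k', b) · C(k'−b, i−b) · ∏_{c=1}^{l−2} C(k'−b, j_c−b). -/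
/-- Backward difference operator. -/
private def Dop (f : ℕ → ℤ) : ℕ → ℤ := fun x => f x - f (x + 1)

/-- Completely monotone up to order `n` on the window `[0, N]`. -/
private def CMon (n N : ℕ) (f : ℕ → ℤ) : Prop :=
  ∀ k x, k ≤ n → x + k ≤ N → 0 ≤ Dop^[k] f x

private lemma Dop_iter_add (k : ℕ) : ∀ (f g : ℕ → ℤ) (x : ℕ),
    Dop^[k] (fun b => f b + g b) x = Dop^[k] f x + Dop^[k] g x := by
  induction k with
  | zero => intro f g x; simp
  | succ k ih =>
    intro f g x
    rw [Function.iterate_succ_apply, Function.iterate_succ_apply,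
      Function.iterate_succ_apply]
    have : Dop (fun b => f b + g b) = fun b => Dop f b + Dop g b := by
      funext b; simp [Dop]; ring
    rw [this, ih]

private lemma Dop_iter_shift (k : ℕ) : ∀ (f : ℕ → ℤ) (x : ℕ),
    Dop^[k] (fun b => f (b + 1)) x = Dop^[k] f (x + 1) := by
  induction k with
  | zero => intro f x; simp
  | succ k ih =>
    intro f x
    rw [Function.iterate_succ_apply, Function.iterate_succ_apply]
    have : Dop (fun b => f (b + 1)) = fun b => Dop f (b + 1) := by
      funext b; simp [Dop]
    rw [this, ih]

private lemma CMon.mul : ∀ (n : ℕ) (N : ℕ) (f g : ℕ → ℤ), CMon n N f → CMon n N g →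
    CMon n N (fun b => f b * g b) := by
  intro n
  induction n with
  | zero =>
    intro N f g hf hg k x hk hx
    interval_cases k
    simpa using mul_nonneg (hf 0 x le_rfl (by omega)) (hg 0 x le_rfl (by omega))
  | succ n ih =>
    intro N f g hf hg k x hk hx
    match k with
    | 0 => simpa using mul_nonneg (hf 0 x (by omega) (by omega)) (hg 0 x (by omega) (by omega))
    | (k + 1) =>
      have hN : 1 ≤ N := by omega
      rw [Function.iterate_succ_apply]
      have hD : Dop (fun b => f b * g b)
          = fun b => f b * Dop g b + g (b + 1) * Dop f b := by
        funext b; simp [Dop]; ring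
      rw [hD, Dop_iter_add]
      have h1 : CMon n (N - 1) f := by
        intro k' x' hk' hx'; exact hf k' x' (by omega) (by omega)
      have h2 : CMon n (N - 1) (Dop g) := by
        intro k' x' hk' hx'
        have : Dop^[k'] (Dop g) x' = Dop^[k' + 1] g x' := by
          rw [Function.iterate_succ_apply]
        rw [this]; exact hg (k' + 1) x' (by omega) (by omega)
      have h3 : CMon n (N - 1) (fun b => g (b + 1)) := by
        intro k' x' hk' hx'
        rw [Dop_iter_shift]
        exact hg k' (x' + 1) (by omega) (by omega)
      have h4 : CMon n (N - 1) (Dop f) := by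
        intro k' x' hk' hx'
        have : Dop^[k'] (Dop f) x' = Dop^[k' + 1] f x' := by
          rw [Function.iterate_succ_apply]
        rw [this]; exact hf (k' + 1) x' (by omega) (by omega)
      exact add_nonneg (ih (N - 1) f (Dop g) h1 h2 k x (by omega) (by omega))
        (ih (N - 1) _ (Dop f) h3 h4 k x (by omega) (by omega))

private lemma CMon.prod {α : Type*} (n N : ℕ) (s : Finset α) (f : α → ℕ → ℤ)
    (h : ∀ a ∈ s, CMon n N (f a)) : CMon n N (fun b => ∏ a ∈ s, f a b) := by
  classical
  induction s using Finset.cons_induction with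
  | empty =>
    intro k x hk hx
    simp only [Finset.prod_empty]
    match k with
    | 0 => norm_num
    | (k + 1) =>
      have hc : Dop (fun _ : ℕ => (1 : ℤ)) = fun _ => (0 : ℤ) := by
        funext b; simp [Dop]
      rw [Function.iterate_succ_apply, hc]
      have : ∀ m x', Dop^[m] (fun _ : ℕ => (0 : ℤ)) x' = 0 := by
        intro m
        induction m with
        | zero => intro x'; simp
        | succ m ih =>
          intro x'
          rw [Function.iterate_succ_apply]
          have : Dop (fun _ : ℕ => (0 : ℤ)) = fun _ => (0 : ℤ) := by
            funext b; simp [Dop]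
          rw [this]; exact ih x'
      rw [this]
  | cons a s ha ih =>
    simp only [Finset.prod_cons]
    exact CMon.mul n N (f a) (fun b => ∏ c ∈ s, f c b)
      (h a (Finset.mem_cons_self a s))
      (ih fun c hc => h c (Finset.mem_cons_of_mem hc))

/-- Iterated differences of `b ↦ C(K - b, j - b)`. -/
private lemma Dop_iter_choose (K j : ℕ) (hjK : j < K) :
    ∀ (k x : ℕ), x + k ≤ j →
      Dop^[k] (fun b => (((K - b).choose (j - b) : ℕ) : ℤ)) x
        = (((K - k - x).choose (j - x) : ℕ) : ℤ) := by
  intro k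
  induction k with
  | zero => intro x hx; simp
  | succ k ih =>
    intro x hx
    rw [Function.iterate_succ_apply']
    show Dop^[k] _ x - Dop^[k] _ (x + 1) = _
    rw [ih x (by omega), ih (x + 1) (by omega)]
    have h1 : K - k - x = (K - (k + 1) - x) + 1 := by omega
    have h2 : j - x = (j - x - 1) + 1 := by omega
    have h3 : K - k - (x + 1) = K - (k + 1) - x := by omega
    have h4 : j - (x + 1) = j - x - 1 := by omega
    rw [h1, h2, h3, h4, Nat.choose_succ_succ]
    push_cast
    ring

/-- Iterated differences as alternating sums. -/
private lemma Dop_iter_eq_sum (F : ℕ → ℤ) : ∀ (k x : ℕ),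
    Dop^[k] F x = ∑ b ∈ Finset.range (k + 1), (-1) ^ b * (k.choose b : ℤ) * F (x + b) := by
  intro k
  induction k with
  | zero => intro x; simp
  | succ k ih =>
    intro x
    rw [Function.iterate_succ_apply']
    show Dop^[k] F x - Dop^[k] F (x + 1) = _
    rw [ih x, ih (x + 1)]
    rw [Finset.sum_range_succ' (fun b => (-1 : ℤ) ^ b * ((k+1).choose b : ℤ) * F (x + b))]
    rw [Finset.sum_range_succ' (fun b => (-1 : ℤ) ^ b * (k.choose b : ℤ) * F (x + b))]
    simp only [Nat.choose_zero_right, pow_zero, Nat.cast_one, one_mul, mul_one, add_zero]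
    have hre : ∀ b, x + 1 + b = x + (b + 1) := by intro b; omega
    rw [show (∑ b ∈ Finset.range (k + 1), (-1 : ℤ) ^ b * (k.choose b : ℤ) * F (x + 1 + b))
        = ∑ b ∈ Finset.range (k + 1), (-1 : ℤ) ^ b * (k.choose b : ℤ) * F (x + (b + 1)) by
      refine Finset.sum_congr rfl fun b _ => by rw [hre]]
    have hext : (∑ b ∈ Finset.range k, (-1 : ℤ) ^ (b + 1) * (k.choose (b + 1) : ℤ) * F (x + (b + 1)))
        = ∑ b ∈ Finset.range (k + 1), (-1 : ℤ) ^ (b + 1) * (k.choose (b + 1) : ℤ) * F (x + (b + 1)) := by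
      rw [Finset.sum_range_succ, Nat.choose_succ_self]
      simp
    rw [hext]
    have key : (∑ b ∈ Finset.range (k + 1), (-1 : ℤ) ^ (b + 1) * (k.choose (b + 1) : ℤ) * F (x + (b + 1)))
        - ∑ b ∈ Finset.range (k + 1), (-1 : ℤ) ^ b * (k.choose b : ℤ) * F (x + (b + 1))
        = ∑ b ∈ Finset.range (k + 1), (-1 : ℤ) ^ (b + 1) * (((k + 1).choose (b + 1) : ℕ) : ℤ) * F (x + (b + 1)) := by
      rw [← Finset.sum_sub_distrib]
      refine Finset.sum_congr rfl fun b _ => ?_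
      rw [Nat.choose_succ_succ]
      push_cast
      ring
    linarith

/-- For all integers `l ≥ 3`, `k' ≥ 1`, and `0 ≤ i ≤ j_a < k'` for every
`a ∈ {1, …, l−2}`, the inequality of integers
`C(k', i) · ∏_a C(k', j_a) ≥ ∑_{b=1}^{i} (−1)^{b+1} C(k', b) C(k'−b, i−b) ∏_c C(k'−b, j_c−b)`
holds. -/
theorem choose_prod_ge_alternating_sum
    (l k' i : ℕ) (j : ℕ → ℕ) (hl : 3 ≤ l) (hk : 1 ≤ k')
    (hj : ∀ a ∈ Finset.range (l - 2), i ≤ j a ∧ j a < k') :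
    ∑ b ∈ Finset.Icc 1 i,
        (-1 : ℤ) ^ (b + 1) * (k'.choose b : ℤ) * ((k' - b).choose (i - b) : ℤ) *
          ∏ c ∈ Finset.range (l - 2), ((k' - b).choose (j c - b) : ℤ)
      ≤ (k'.choose i : ℤ) * ∏ a ∈ Finset.range (l - 2), (k'.choose (j a) : ℤ) := by
  have h0 : (0 : ℕ) ∈ Finset.range (l - 2) := by
    simp; omega
  have hik : i < k' := lt_of_le_of_lt (hj 0 h0).1 (hj 0 h0).2
  set P : ℕ → ℤ := fun b => ∏ c ∈ Finset.range (l - 2), ((k' - b).choose (j c - b) : ℤ) with hP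
  have hPCM : CMon i i P := by
    apply CMon.prod
    intro a ha k x hk' hx
    have hja := (hj a ha).1
    rw [Dop_iter_choose k' (j a) (hj a ha).2 k x (by omega)]
    positivity
  have hD : (0 : ℤ) ≤ Dop^[i] P 0 := hPCM i 0 le_rfl (by omega)
  rw [Dop_iter_eq_sum] at hD
  have hsplit : Finset.range (i + 1) = insert 0 (Finset.Icc 1 i) := by
    ext x
    simp only [Finset.mem_range, Finset.mem_insert, Finset.mem_Icc]
    omega
  rw [hsplit, Finset.sum_insert (by simp)] at hD
  simp only [pow_zero, Nat.choose_zero_right, Nat.cast_one, one_mul, zero_add] at hD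
  have hle : ∑ b ∈ Finset.Icc 1 i, (-1 : ℤ) ^ (b + 1) * (i.choose b : ℤ) * P b ≤ P 0 := by
    have hneg : (∑ b ∈ Finset.Icc 1 i, (-1 : ℤ) ^ (b + 1) * (i.choose b : ℤ) * P b)
        + ∑ b ∈ Finset.Icc 1 i, (-1 : ℤ) ^ b * (i.choose b : ℤ) * P b = 0 := by
      rw [← Finset.sum_add_distrib]
      exact Finset.sum_eq_zero fun b _ => by ring
    linarith
  have hmain : (∑ b ∈ Finset.Icc 1 i,
        (-1 : ℤ) ^ (b + 1) * (k'.choose b : ℤ) * ((k' - b).choose (i - b) : ℤ) *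
          ∏ c ∈ Finset.range (l - 2), ((k' - b).choose (j c - b) : ℤ))
      = (k'.choose i : ℤ) * ∑ b ∈ Finset.Icc 1 i, (-1 : ℤ) ^ (b + 1) * (i.choose b : ℤ) * P b := by
    rw [Finset.mul_sum]
    refine Finset.sum_congr rfl fun b hb => ?_
    have hb1 : b ≤ i := (Finset.mem_Icc.mp hb).2
    have h := Nat.choose_mul (n := k') hb1
    have h' : (k'.choose i : ℤ) * (i.choose b : ℤ)
        = (k'.choose b : ℤ) * ((k' - b).choose (i - b) : ℤ) := by exact_mod_cast h
    rw [hP]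
    linear_combination ((-1 : ℤ) ^ b * ∏ c ∈ Finset.range (l - 2), ((k' - b).choose (j c - b) : ℤ)) * h'
  rw [hmain]
  have hP0 : P 0 = ∏ a ∈ Finset.range (l - 2), (k'.choose (j a) : ℤ) := by
    rw [hP]
    simp
  calc (k'.choose i : ℤ) * ∑ b ∈ Finset.Icc 1 i, (-1 : ℤ) ^ (b + 1) * (i.choose b : ℤ) * P b
      ≤ (k'.choose i : ℤ) * P 0 := by
        apply mul_le_mul_of_nonneg_left hle (by positivity)
    _ = (k'.choose i : ℤ) * ∏ a ∈ Finset.range (l - 2), (k'.choose (j a) : ℤ) := by rw [hP0]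
end

section
/- For all natural numbers b, i, j_1, k with 1 ≤ b ≤ i ≤ j_1 < k, the following identity of rational numbers holds: (b / (k − b)) · C(k, b) · C(k − b, i − b) · C(k − b, j_1 − b) = (i / (k − j_1)) · C(k, i) · C(i − 1, b − 1) · C(k − b − 1, j_1 − b). -/
open Nat

set_option maxHeartbeats 1000000

/-- For all natural numbers `1 ≤ b ≤ i ≤ j₁ < k`, the identity of rational numbers
`(b/(k−b)) C(k,b) C(k−b,i−b) C(k−b,j₁−b) = (i/(k−j₁)) C(k,i) C(i−1,b−1) C(k−b−1,j₁−b)`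
holds. -/
theorem choose_fraction_identity
    (b i j₁ k : ℕ) (hb : 1 ≤ b) (hbi : b ≤ i) (hij : i ≤ j₁) (hjk : j₁ < k) :
    (b : ℚ) / ((k : ℚ) - (b : ℚ)) * (k.choose b : ℚ) * ((k - b).choose (i - b) : ℚ) *
        ((k - b).choose (j₁ - b) : ℚ)
      = (i : ℚ) / ((k : ℚ) - (j₁ : ℚ)) * (k.choose i : ℚ) * ((i - 1).choose (b - 1) : ℚ) *
        ((k - b - 1).choose (j₁ - b) : ℚ) := by
  obtain ⟨c, rfl⟩ : ∃ c, b = c + 1 := ⟨b - 1, by omega⟩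
  obtain ⟨x, rfl⟩ : ∃ x, i = c + 1 + x := ⟨i - (c+1), by omega⟩
  obtain ⟨y, rfl⟩ : ∃ y, j₁ = c + 1 + x + y := ⟨j₁ - (c+1+x), by omega⟩
  obtain ⟨z, rfl⟩ : ∃ z, k = c + 1 + x + y + z + 1 := ⟨k - (c+1+x+y+1), by omega⟩
  have h1 : (c + 1 + x + y + z + 1) - (c + 1) = x + y + z + 1 := by omega
  have h2 : (c + 1 + x) - (c + 1) = x := by omega
  have h3 : (c + 1 + x + y) - (c + 1) = x + y := by omega
  have h4 : (c + 1 + x) - 1 = c + x := by omega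
  have h5 : (c + 1) - 1 = c := by omega
  have h6 : x + y + z + 1 - 1 = x + y + z := by omega
  rw [h1, h2, h3, h4, h5, h6]
  have e1 : (((c+1+x+y+z+1).choose (c+1) : ℕ) : ℚ)
      = ((c+1+x+y+z+1)! : ℚ) / (((c+1)! : ℚ) * ((x+y+z+1)! : ℚ)) := by
    rw [Nat.cast_choose ℚ (by omega), show c+1+x+y+z+1 - (c+1) = x+y+z+1 from by omega]
  have e2 : (((x+y+z+1).choose x : ℕ) : ℚ)
      = ((x+y+z+1)! : ℚ) / ((x ! : ℚ) * ((y+z+1)! : ℚ)) := by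
    rw [Nat.cast_choose ℚ (by omega), show x+y+z+1 - x = y+z+1 from by omega]
  have e3 : (((x+y+z+1).choose (x+y) : ℕ) : ℚ)
      = ((x+y+z+1)! : ℚ) / (((x+y)! : ℚ) * ((z+1)! : ℚ)) := by
    rw [Nat.cast_choose ℚ (by omega), show x+y+z+1 - (x+y) = z+1 from by omega]
  have e4 : (((c+1+x+y+z+1).choose (c+1+x) : ℕ) : ℚ)
      = ((c+1+x+y+z+1)! : ℚ) / (((c+1+x)! : ℚ) * ((y+z+1)! : ℚ)) := by
    rw [Nat.cast_choose ℚ (by omega), show c+1+x+y+z+1 - (c+1+x) = y+z+1 from by omega]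
  have e5 : (((c+x).choose c : ℕ) : ℚ) = ((c+x)! : ℚ) / ((c ! : ℚ) * (x ! : ℚ)) := by
    rw [Nat.cast_choose ℚ (by omega), show c+x - c = x from by omega]
  have e6 : (((x+y+z).choose (x+y) : ℕ) : ℚ)
      = ((x+y+z)! : ℚ) / (((x+y)! : ℚ) * (z ! : ℚ)) := by
    rw [Nat.cast_choose ℚ (by omega), show x+y+z - (x+y) = z from by omega]
  rw [e1, e2, e3, e4, e5, e6]
  have f1 : (((c+1)! : ℕ) : ℚ) = (c+1) * (c ! : ℚ) := by exact_mod_cast Nat.factorial_succ c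
  have f2 : (((x+y+z+1)! : ℕ) : ℚ) = (x+y+z+1) * ((x+y+z)! : ℚ) := by
    exact_mod_cast Nat.factorial_succ (x+y+z)
  have f3 : (((c+1+x)! : ℕ) : ℚ) = (c+1+x) * ((c+x)! : ℚ) := by
    have h : c + 1 + x = (c + x) + 1 := by omega
    rw [h]
    push_cast [Nat.factorial_succ]
    ring
  have f4 : (((z+1)! : ℕ) : ℚ) = (z+1) * (z ! : ℚ) := by exact_mod_cast Nat.factorial_succ z
  rw [f1, f2, f3, f4]
  have nc : ∀ n : ℕ, ((n ! : ℕ) : ℚ) ≠ 0 := fun n => by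
    exact_mod_cast Nat.factorial_ne_zero n
  push_cast
  have hxyz : ((x:ℚ)+y+z+1) ≠ 0 := by positivity
  have hz1 : ((z:ℚ)+1) ≠ 0 := by positivity
  have d1 : ((c:ℚ)+1+x+y+z+1) - ((c:ℚ)+1) = (x:ℚ)+y+z+1 := by ring
  have d2 : ((c:ℚ)+1+x+y+z+1) - ((c:ℚ)+1+x+y) = (z:ℚ)+1 := by ring
  rw [d1, d2]
  field_simp
end

section
/- Let l ≥ 3 and k ≥ 1 be integers and let i, j_1, …, j_{l−2} be integers with 0 ≤ i ≤ j_a < k for every a ∈ {1,…,l−2}. Then the following inequality of real numbers holds: Σ_{b=1}^{i} (−1)^{b+1} · (k/(k−b))^{l−2} · C(k, b) · C(k−b, i−b) · ∏_{c=1}^{l−2} C(k−b, j_c−b) ≥ Σ_{b=1}^{i} (−1)^{b+1} · C(k, b) · C(k−b, i−b) · ∏_{c=1}^{l−2} C(k−b, j_c−b). -/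
open Finset

/-- The set of `m`-tuples of subsets of `range n`, the `c`-th of size `j c`, such that no
element of `range i` lies in all of them. -/
private def avoidS (m i : ℕ) (j : Fin m → ℕ) (n : ℕ) : Finset (Fin m → Finset ℕ) :=
  (Fintype.piFinset fun c => (Finset.range n).powersetCard (j c)).filter
    fun f => ∀ t ∈ Finset.range i, ∃ c, t ∉ f c

private lemma card_filter_superset (n jc : ℕ) (B : Finset ℕ) (hB : B ⊆ Finset.range n)
    (hbj : B.card ≤ jc) :
    (((Finset.range n).powersetCard jc).filter (fun S => B ⊆ S)).card
      = (n - B.card).choose (jc - B.card) := by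
  have hcard : (Finset.range n \ B).card = n - B.card := by
    rw [card_sdiff_of_subset hB, card_range]
  rw [← hcard, ← Finset.card_powersetCard (jc - B.card) (Finset.range n \ B)]
  apply Finset.card_bij' (fun S _ => S \ B) (fun T _ => T ∪ B)
  · intro S hS
    rw [mem_filter, mem_powersetCard] at hS
    obtain ⟨⟨hSn, hSc⟩, hBS⟩ := hS
    rw [mem_powersetCard]
    refine ⟨sdiff_subset_sdiff hSn Subset.rfl, ?_⟩
    rw [card_sdiff_of_subset hBS, hSc]
  · intro T hT
    rw [mem_powersetCard] at hT
    obtain ⟨hTn, hTc⟩ := hT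
    have hdisj : Disjoint T B := disjoint_of_subset_left hTn sdiff_disjoint
    rw [mem_filter, mem_powersetCard]
    refine ⟨⟨?_, ?_⟩, subset_union_right⟩
    · exact union_subset (hTn.trans (sdiff_subset)) hB
    · rw [card_union_of_disjoint hdisj, hTc]
      omega
  · intro S hS
    rw [mem_filter] at hS
    exact sdiff_union_of_subset hS.2
  · intro T hT
    rw [mem_powersetCard] at hT
    have hdisj : Disjoint T B := disjoint_of_subset_left hT.1 sdiff_disjoint
    rw [union_sdiff_right, sdiff_eq_self_of_disjoint hdisj]

private lemma filter_piFinset_card (m : ℕ) (F : Fin m → Finset (Finset ℕ)) (B : Finset ℕ) :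
    ((Fintype.piFinset F).filter fun f => ∀ c, B ⊆ f c).card
      = ∏ c, ((F c).filter fun S => B ⊆ S).card := by
  rw [← Fintype.card_piFinset]
  congr 1
  ext f
  simp only [mem_filter, Fintype.mem_piFinset, mem_filter]
  exact ⟨fun h c => ⟨h.1 c, h.2 c⟩, fun h => ⟨fun c => (h c).1, fun c => (h c).2⟩⟩

private lemma cardA (m i n : ℕ) (j : Fin m → ℕ) (hij : ∀ c, i ≤ j c) (hin : i ≤ n) :
    ((avoidS m i j n).card : ℤ)
      = ∑ b ∈ Finset.range (i + 1),
          (-1 : ℤ) ^ b * (i.choose b : ℤ) * ∏ c, ((n - b).choose (j c - b) : ℤ) := by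
  classical
  have step1 : ((avoidS m i j n).card : ℤ)
      = ∑ f ∈ Fintype.piFinset (fun c => (Finset.range n).powersetCard (j c)),
          ∑ B ∈ (Finset.range i).powerset,
            if (∀ c, B ⊆ f c) then (-1 : ℤ) ^ B.card else 0 := by
    rw [avoidS, Finset.card_filter]
    push_cast
    refine Finset.sum_congr rfl fun f hf => ?_
    have hpow : (Finset.range i).powerset.filter (fun B => ∀ c, B ⊆ f c)
        = ((Finset.range i).filter (fun t => ∀ c, t ∈ f c)).powerset := by
      ext B
      simp only [mem_filter, mem_powerset, subset_iff, mem_filter]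
      constructor
      · rintro ⟨h1, h2⟩ x hx
        exact ⟨h1 hx, fun c => h2 c hx⟩
      · intro h
        exact ⟨fun x hx => (h hx).1, fun c x hx => (h hx).2 c⟩
    rw [← Finset.sum_filter, hpow, Finset.sum_powerset_neg_one_pow_card]
    congr 1
    rw [Finset.filter_eq_empty_iff]
    simp only [not_forall]
  rw [step1, Finset.sum_comm]
  have step2 : ∀ B ∈ (Finset.range i).powerset,
      (∑ f ∈ Fintype.piFinset (fun c => (Finset.range n).powersetCard (j c)),
        if (∀ c, B ⊆ f c) then (-1 : ℤ) ^ B.card else 0)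
      = (-1 : ℤ) ^ B.card * ∏ c, ((n - B.card).choose (j c - B.card) : ℤ) := by
    intro B hB
    rw [mem_powerset] at hB
    have hBn : B ⊆ Finset.range n := hB.trans (range_subset_range.2 hin)
    have hBc : B.card ≤ i := by
      have := card_le_card hB; simpa using this
    rw [← Finset.sum_filter, Finset.sum_const, filter_piFinset_card]
    have : ∀ c : Fin m, (((Finset.range n).powersetCard (j c)).filter (fun S => B ⊆ S)).card
        = (n - B.card).choose (j c - B.card) := fun c =>
      card_filter_superset n (j c) B hBn (hBc.trans (hij c))
    simp only [this]
    rw [nsmul_eq_mul, mul_comm]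
    push_cast
    ring
  rw [Finset.sum_congr rfl step2]
  rw [Finset.sum_powerset_apply_card (fun b => (-1 : ℤ) ^ b * ∏ c, ((n - b).choose (j c - b) : ℤ))]
  rw [card_range]
  refine Finset.sum_congr rfl fun b _ => ?_
  rw [nsmul_eq_mul]
  ring

private lemma cardB (m i n : ℕ) (j : Fin m → ℕ) (hin : i ≤ n) :
    (n + 1) ^ m * (avoidS m i j n).card
      ≤ (∏ c, (n + 1 - j c)) * (avoidS m i j (n + 1)).card := by
  classical
  -- the domain
  set D₁ : Finset ((Fin m → Finset ℕ) × (Fin m → ℕ)) :=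
    (avoidS m i j n) ×ˢ Fintype.piFinset (fun _ : Fin m => Finset.range (n + 1)) with hD₁
  -- the codomain
  set D₂ : Finset ((_ : Fin m → Finset ℕ) × (Fin m → ℕ)) :=
    (avoidS m i j (n + 1)).sigma
      (fun f => Fintype.piFinset (fun c => Finset.range (n + 1) \ f c)) with hD₂
  have hcard₁ : D₁.card = (n + 1) ^ m * (avoidS m i j n).card := by
    rw [hD₁, Finset.card_product, Fintype.card_piFinset]
    simp [mul_comm]
  have hcard₂ : D₂.card = (∏ c, (n + 1 - j c)) * (avoidS m i j (n + 1)).card := by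
    rw [hD₂, Finset.card_sigma]
    have : ∀ f ∈ avoidS m i j (n + 1),
        (Fintype.piFinset (fun c => Finset.range (n + 1) \ f c)).card
          = ∏ c, (n + 1 - j c) := by
      intro f hf
      rw [Fintype.card_piFinset]
      refine Finset.prod_congr rfl fun c _ => ?_
      have hf' : f c ∈ (Finset.range (n + 1)).powersetCard (j c) := by
        rw [avoidS, mem_filter, Fintype.mem_piFinset] at hf
        exact hf.1 c
      rw [mem_powersetCard] at hf'
      rw [card_sdiff_of_subset hf'.1, card_range, hf'.2]
    rw [Finset.sum_congr rfl this, Finset.sum_const, smul_eq_mul, mul_comm]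
  rw [← hcard₁, ← hcard₂]
  -- the injection
  set Φ : ((Fin m → Finset ℕ) × (Fin m → ℕ)) → ((_ : Fin m → Finset ℕ) × (Fin m → ℕ)) :=
    fun p => ⟨fun c => if p.2 c = n then p.1 c
        else if p.2 c ∈ p.1 c then insert n ((p.1 c).erase (p.2 c)) else p.1 c, p.2⟩ with hΦ
  apply Finset.card_le_card_of_injOn Φ
  · -- maps into D₂
    rintro ⟨f, t⟩ hp
    rw [hD₁, Finset.mem_coe, Finset.mem_product, Fintype.mem_piFinset] at hp
    obtain ⟨hf, ht⟩ := hp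
    rw [avoidS, mem_filter, Fintype.mem_piFinset] at hf
    obtain ⟨hf1, hf2⟩ := hf
    -- facts about f c
    have hsub : ∀ c, f c ⊆ Finset.range n := fun c => (mem_powersetCard.1 (hf1 c)).1
    have hcardf : ∀ c, (f c).card = j c := fun c => (mem_powersetCard.1 (hf1 c)).2
    have hnf : ∀ c, n ∉ f c := fun c hn => by
      have := hsub c hn; simp at this
    rw [hD₂, Finset.mem_coe, Finset.mem_sigma]
    constructor
    · rw [avoidS, mem_filter, Fintype.mem_piFinset]
      constructor
      · intro c
        rw [mem_powersetCard]
        by_cases h1 : t c = n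
        · simp only [hΦ, h1, if_pos rfl]
          exact ⟨(hsub c).trans (range_subset_range.2 (Nat.le_succ n)), hcardf c⟩
        by_cases h2 : t c ∈ f c
        · simp only [hΦ, if_neg h1, if_pos h2]
          constructor
          · intro x hx
            rcases mem_insert.1 hx with rfl | hx'
            · simp
            · exact (range_subset_range.2 (Nat.le_succ n)) (hsub c (erase_subset _ _ hx'))
          · rw [card_insert_of_notMem (fun hn => hnf c (erase_subset _ _ hn)),
              card_erase_of_mem h2, hcardf c]
            have : 1 ≤ j c := by
              rw [← hcardf c]; exact card_pos.2 ⟨t c, h2⟩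
            omega
        · simp only [hΦ, if_neg h1, if_neg h2]
          exact ⟨(hsub c).trans (range_subset_range.2 (Nat.le_succ n)), hcardf c⟩
      · -- avoidance
        intro s hs
        obtain ⟨c, hc⟩ := hf2 s hs
        refine ⟨c, fun hmem => ?_⟩
        have hsn : s ≠ n := by
          have := mem_range.1 hs; omega
        have hsub' : (fun c => if t c = n then f c
            else if t c ∈ f c then insert n ((f c).erase (t c)) else f c) c ⊆ insert n (f c) := by
          by_cases h1 : t c = n
          · simp only [if_pos h1]; exact subset_insert _ _
          by_cases h2 : t c ∈ f c
          · simp only [if_neg h1, if_pos h2]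
            exact insert_subset_insert _ ((erase_subset _ _))
          · simp only [if_neg h1, if_neg h2]; exact subset_insert _ _
        have := hsub' hmem
        rcases mem_insert.1 this with h | h
        · exact hsn h
        · exact hc h
    · rw [Fintype.mem_piFinset]
      intro c
      rw [mem_sdiff, mem_range]
      refine ⟨by simpa using ht c, ?_⟩
      by_cases h1 : t c = n
      · simp only [hΦ, if_pos h1]
        rw [h1]; exact hnf c
      by_cases h2 : t c ∈ f c
      · simp only [hΦ, if_neg h1, if_pos h2]
        intro hmem
        rcases mem_insert.1 hmem with h | h
        · exact h1 h
        · exact (notMem_erase _ _) h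
      · simp only [hΦ, if_neg h1, if_neg h2]
        exact h2
  · -- injectivity
    rintro ⟨f, t⟩ hp ⟨g, s⟩ hq heq
    simp only [hD₁, Finset.coe_product, Set.mem_prod, Finset.mem_coe] at hp hq
    obtain ⟨hf, -⟩ := hp
    obtain ⟨hg, -⟩ := hq
    rw [avoidS, mem_filter, Fintype.mem_piFinset] at hf hg
    have hnf : ∀ c, n ∉ f c := fun c hn => by
      have := (mem_powersetCard.1 (hf.1 c)).1 hn; simp at this
    have hng : ∀ c, n ∉ g c := fun c hn => by
      have := (mem_powersetCard.1 (hg.1 c)).1 hn; simp at this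
    have hts : t = s := congrArg Sigma.snd heq
    subst hts
    have hfst := congrArg Sigma.fst heq
    simp only [hΦ] at hfst
    have hfg : f = g := by
      funext c
      have hc := congrFun hfst c
      by_cases h1 : t c = n
      · simpa only [if_pos h1] using hc
      by_cases h2 : t c ∈ f c <;> by_cases h3 : t c ∈ g c
      · simp only [if_neg h1, if_pos h2, if_pos h3] at hc
        have : (f c).erase (t c) = (g c).erase (t c) := by
          have e1 : ((insert n ((f c).erase (t c))).erase n) = (f c).erase (t c) :=
            erase_insert (fun hn => hnf c (erase_subset _ _ hn))
          have e2 : ((insert n ((g c).erase (t c))).erase n) = (g c).erase (t c) :=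
            erase_insert (fun hn => hng c (erase_subset _ _ hn))
          rw [← e1, ← e2, hc]
        have := congrArg (insert (t c)) this
        rwa [insert_erase h2, insert_erase h3] at this
      · simp only [if_neg h1, if_pos h2, if_neg h3] at hc
        exfalso
        exact hng c (hc ▸ mem_insert_self n _)
      · simp only [if_neg h1, if_neg h2, if_pos h3] at hc
        exfalso
        exact hnf c (hc ▸ mem_insert_self n _)
      · simpa only [if_neg h1, if_neg h2, if_neg h3] using hc
    rw [hfg]

private lemma nat_id (n r : ℕ) (hn : 1 ≤ n) :
    n * (n - 1).choose r = n.choose r * (n - r) := by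
  obtain ⟨n', rfl⟩ : ∃ n', n = n' + 1 := ⟨n - 1, by omega⟩
  rw [Nat.add_sub_cancel, ← Nat.choose_succ_right_eq, ← Nat.add_one_mul_choose_eq]

private lemma key_id (k b jc : ℕ) (hb : b ≤ jc) (hj : jc < k) :
    (k : ℝ) / ((k : ℝ) - b) * ((k - b).choose (jc - b) : ℝ)
      = (k : ℝ) / ((k : ℝ) - jc) * ((k - 1 - b).choose (jc - b) : ℝ) := by
  have hbk : b < k := lt_of_le_of_lt hb hj
  have hb' : (b : ℝ) < k := by exact_mod_cast hbk
  have hj' : (jc : ℝ) < k := by exact_mod_cast hj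
  have h1 : ((k : ℝ) - b) ≠ 0 := by linarith
  have h2 : ((k : ℝ) - jc) ≠ 0 := by linarith
  have hnat : (k - b) * (k - 1 - b).choose (jc - b) = (k - b).choose (jc - b) * (k - jc) := by
    have h := nat_id (k - b) (jc - b) (by omega)
    have e1 : k - b - 1 = k - 1 - b := by omega
    have e2 : (k - b) - (jc - b) = k - jc := by omega
    rw [e1, e2] at h; exact h
  have hcast : ((k : ℝ) - b) * ((k - 1 - b).choose (jc - b) : ℝ)
      = ((k - b).choose (jc - b) : ℝ) * ((k : ℝ) - jc) := by
    have := congrArg (Nat.cast : ℕ → ℝ) hnat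
    push_cast [Nat.cast_sub hbk.le, Nat.cast_sub hj.le] at this
    exact this
  field_simp
  linear_combination (-(k : ℝ)) * hcast

private lemma split_sum (i : ℕ) (g : ℕ → ℝ) :
    ∑ b ∈ Finset.Icc 1 i, (-1 : ℝ) ^ (b + 1) * g b
      = g 0 - ∑ b ∈ Finset.range (i + 1), (-1 : ℝ) ^ b * g b := by
  rw [← Finset.Ico_add_one_right_eq_Icc, Finset.sum_Ico_eq_sum_range]
  rw [Finset.sum_range_succ' (fun b => (-1 : ℝ) ^ b * g b) i]
  simp only [pow_zero, one_mul]
  have h : ∀ b, (-1 : ℝ) ^ (1 + b + 1) * g (1 + b) = -((-1 : ℝ) ^ (b + 1) * g (b + 1)) := by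
    intro b
    rw [add_comm 1 b]
    ring
  rw [Finset.sum_congr rfl fun b _ => h b, Finset.sum_neg_distrib]
  simp only [Nat.add_sub_cancel]
  ring

private lemma cardA' (m i n : ℕ) (j : Fin m → ℕ) (hij : ∀ c, i ≤ j c) (hin : i ≤ n) :
    ((avoidS m i j n).card : ℝ)
      = ∑ b ∈ Finset.range (i + 1),
          (-1 : ℝ) ^ b * (i.choose b : ℝ) * ∏ c, ((n - b).choose (j c - b) : ℝ) := by
  have h := congrArg (Int.cast : ℤ → ℝ) (cardA m i n j hij hin)
  push_cast at h
  exact h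

/-- For integers `l ≥ 3`, `k ≥ 1`, and `0 ≤ i ≤ j_a < k` for every `a ∈ {1, …, l−2}`,
the inequality of real numbers
`∑_{b=1}^{i} (−1)^{b+1} (k/(k−b))^{l−2} C(k,b) C(k−b,i−b) ∏_c C(k−b,j_c−b)
  ≥ ∑_{b=1}^{i} (−1)^{b+1} C(k,b) C(k−b,i−b) ∏_c C(k−b,j_c−b)` holds. -/
theorem alternating_sum_ratio_ge
    (l k i : ℕ) (j : ℕ → ℕ) (hl : 3 ≤ l) (hk : 1 ≤ k)
    (hj : ∀ a ∈ Finset.range (l - 2), i ≤ j a ∧ j a < k) :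
    ∑ b ∈ Finset.Icc 1 i,
        (-1 : ℝ) ^ (b + 1) * (k.choose b : ℝ) * ((k - b).choose (i - b) : ℝ) *
          ∏ c ∈ Finset.range (l - 2), ((k - b).choose (j c - b) : ℝ)
      ≤ ∑ b ∈ Finset.Icc 1 i,
          (-1 : ℝ) ^ (b + 1) * ((k : ℝ) / ((k : ℝ) - (b : ℝ))) ^ (l - 2) *
            (k.choose b : ℝ) * ((k - b).choose (i - b) : ℝ) *
            ∏ c ∈ Finset.range (l - 2), ((k - b).choose (j c - b) : ℝ) := by
  classical
  set m := l - 2 with hm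
  have hm1 : 1 ≤ m := by omega
  set j' : Fin m → ℕ := fun c => j c.val with hj'
  have hjc : ∀ c : Fin m, i ≤ j' c ∧ j' c < k := fun c => hj c.val (mem_range.2 c.isLt)
  have hik1 : i ≤ k - 1 := by
    have := hjc ⟨0, hm1⟩; omega
  have hik : i ≤ k := by omega
  -- abbreviations
  set K : ℝ := ∏ c : Fin m, (k : ℝ) / ((k : ℝ) - (j' c : ℝ)) with hK
  set g1 : ℕ → ℝ := fun b =>
    (k.choose i : ℝ) * (i.choose b : ℝ) * ∏ c : Fin m, ((k - b).choose (j' c - b) : ℝ) with hg1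
  set g2 : ℕ → ℝ := fun b =>
    (k.choose i : ℝ) * (i.choose b : ℝ) *
      (K * ∏ c : Fin m, ((k - 1 - b).choose (j' c - b) : ℝ)) with hg2
  -- E1 : rewrite the left sum
  have E1 : ∑ b ∈ Finset.Icc 1 i,
      (-1 : ℝ) ^ (b + 1) * (k.choose b : ℝ) * ((k - b).choose (i - b) : ℝ) *
        ∏ c ∈ Finset.range (l - 2), ((k - b).choose (j c - b) : ℝ)
      = ∑ b ∈ Finset.Icc 1 i, (-1 : ℝ) ^ (b + 1) * g1 b := by
    refine Finset.sum_congr rfl fun b hb => ?_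
    rw [mem_Icc] at hb
    have hchoose : (k.choose i : ℝ) * (i.choose b : ℝ)
        = (k.choose b : ℝ) * ((k - b).choose (i - b) : ℝ) := by
      exact_mod_cast congrArg (Nat.cast : ℕ → ℝ) (Nat.choose_mul (n := k) hb.2)
    have hprod : ∏ c ∈ Finset.range (l - 2), ((k - b).choose (j c - b) : ℝ)
        = ∏ c : Fin m, ((k - b).choose (j' c - b) : ℝ) := by
      rw [Fin.prod_univ_eq_prod_range (fun c => ((k - b).choose (j c - b) : ℝ)) m]
    rw [hprod, hg1]
    linear_combination (-(-1 : ℝ) ^ (b + 1) *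
      ∏ c : Fin m, ((k - b).choose (j' c - b) : ℝ)) * hchoose
  -- E2 : rewrite the right sum
  have E2 : ∑ b ∈ Finset.Icc 1 i,
      (-1 : ℝ) ^ (b + 1) * ((k : ℝ) / ((k : ℝ) - (b : ℝ))) ^ (l - 2) *
        (k.choose b : ℝ) * ((k - b).choose (i - b) : ℝ) *
        ∏ c ∈ Finset.range (l - 2), ((k - b).choose (j c - b) : ℝ)
      = ∑ b ∈ Finset.Icc 1 i, (-1 : ℝ) ^ (b + 1) * g2 b := by
    refine Finset.sum_congr rfl fun b hb => ?_
    rw [mem_Icc] at hb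
    have hchoose : (k.choose i : ℝ) * (i.choose b : ℝ)
        = (k.choose b : ℝ) * ((k - b).choose (i - b) : ℝ) := by
      exact_mod_cast congrArg (Nat.cast : ℕ → ℝ) (Nat.choose_mul (n := k) hb.2)
    have hprod : ∏ c ∈ Finset.range (l - 2), ((k - b).choose (j c - b) : ℝ)
        = ∏ c : Fin m, ((k - b).choose (j' c - b) : ℝ) := by
      rw [Fin.prod_univ_eq_prod_range (fun c => ((k - b).choose (j c - b) : ℝ)) m]
    have hratio : ((k : ℝ) / ((k : ℝ) - (b : ℝ))) ^ (l - 2) *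
          ∏ c : Fin m, ((k - b).choose (j' c - b) : ℝ)
        = K * ∏ c : Fin m, ((k - 1 - b).choose (j' c - b) : ℝ) := by
      have hconst : ((k : ℝ) / ((k : ℝ) - (b : ℝ))) ^ (l - 2)
          = ∏ _c : Fin m, (k : ℝ) / ((k : ℝ) - (b : ℝ)) := by
        rw [Finset.prod_const, card_univ, Fintype.card_fin]
      rw [hconst, ← Finset.prod_mul_distrib,
        Finset.prod_congr rfl
          (fun c _ => key_id k b (j' c) (le_trans hb.2 (hjc c).1) (hjc c).2),
        Finset.prod_mul_distrib, hK]
    rw [hprod]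
    calc (-1 : ℝ) ^ (b + 1) * ((k : ℝ) / ((k : ℝ) - (b : ℝ))) ^ (l - 2) *
          (k.choose b : ℝ) * ((k - b).choose (i - b) : ℝ) *
          ∏ c : Fin m, ((k - b).choose (j' c - b) : ℝ)
        = ((k.choose b : ℝ) * ((k - b).choose (i - b) : ℝ)) *
            ((-1 : ℝ) ^ (b + 1) * (((k : ℝ) / ((k : ℝ) - (b : ℝ))) ^ (l - 2) *
              ∏ c : Fin m, ((k - b).choose (j' c - b) : ℝ))) := by ring
      _ = ((k.choose i : ℝ) * (i.choose b : ℝ)) *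
            ((-1 : ℝ) ^ (b + 1) *
              (K * ∏ c : Fin m, ((k - 1 - b).choose (j' c - b) : ℝ))) := by
          rw [← hchoose, hratio]
      _ = (-1 : ℝ) ^ (b + 1) * g2 b := by rw [hg2]; ring
  rw [E1, E2, split_sum i g1, split_sum i g2]
  -- the constant terms agree
  have h0 : g1 0 = g2 0 := by
    rw [hg1, hg2]
    simp only [Nat.sub_zero, Nat.choose_zero_right, Nat.cast_one]
    congr 1
    rw [hK, ← Finset.prod_mul_distrib]
    refine Finset.prod_congr rfl fun c _ => ?_
    have hkey := key_id k 0 (j' c) (Nat.zero_le _) (hjc c).2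
    have hk0 : ((k : ℝ) ≠ 0) := by positivity
    simp only [Nat.sub_zero, Nat.cast_zero, sub_zero, div_self hk0, one_mul] at hkey
    exact hkey
  rw [h0]
  -- identify the full alternating sums with cardinalities
  have S1 : ∑ b ∈ Finset.range (i + 1), (-1 : ℝ) ^ b * g1 b
      = (k.choose i : ℝ) * ((avoidS m i j' k).card : ℝ) := by
    rw [cardA' m i k j' (fun c => (hjc c).1) hik, Finset.mul_sum]
    refine Finset.sum_congr rfl fun b _ => ?_
    rw [hg1]; ring
  have S2 : ∑ b ∈ Finset.range (i + 1), (-1 : ℝ) ^ b * g2 b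
      = (k.choose i : ℝ) * (K * ((avoidS m i j' (k - 1)).card : ℝ)) := by
    rw [cardA' m i (k - 1) j' (fun c => (hjc c).1) hik1, Finset.mul_sum, Finset.mul_sum]
    refine Finset.sum_congr rfl fun b _ => ?_
    rw [hg2]; ring
  rw [S1, S2]
  -- the key counting inequality
  have hKN : K * ((avoidS m i j' (k - 1)).card : ℝ) ≤ ((avoidS m i j' k).card : ℝ) := by
    have hB := cardB m i (k - 1) j' hik1
    rw [Nat.sub_add_cancel hk] at hB
    have hBr : ((k : ℝ)) ^ m * ((avoidS m i j' (k - 1)).card : ℝ)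
        ≤ (∏ c : Fin m, ((k : ℝ) - (j' c : ℝ))) * ((avoidS m i j' k).card : ℝ) := by
      have heq : ∏ c : Fin m, ((k : ℝ) - (j' c : ℝ)) = ∏ c : Fin m, (((k - j' c : ℕ) : ℝ)) :=
        Finset.prod_congr rfl fun c _ => (Nat.cast_sub (hjc c).2.le).symm
      rw [heq]
      exact_mod_cast hB
    have hprodpos : 0 < ∏ c : Fin m, ((k : ℝ) - (j' c : ℝ)) := by
      apply Finset.prod_pos
      intro c _
      have : ((j' c : ℝ)) < k := by exact_mod_cast (hjc c).2
      linarith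
    have hKprod : K * ∏ c : Fin m, ((k : ℝ) - (j' c : ℝ)) = (k : ℝ) ^ m := by
      rw [hK, ← Finset.prod_mul_distrib]
      have : ∀ c : Fin m, (k : ℝ) / ((k : ℝ) - (j' c : ℝ)) * ((k : ℝ) - (j' c : ℝ)) = k := by
        intro c
        have hlt : ((j' c : ℝ)) < k := by exact_mod_cast (hjc c).2
        exact div_mul_cancel₀ _ (sub_ne_zero.mpr (ne_of_lt hlt).symm)
      rw [Finset.prod_congr rfl fun c _ => this c, Finset.prod_const, card_univ,
        Fintype.card_fin]
    rw [← mul_le_mul_iff_of_pos_right hprodpos]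
    calc K * ((avoidS m i j' (k - 1)).card : ℝ) * ∏ c : Fin m, ((k : ℝ) - (j' c : ℝ))
        = (k : ℝ) ^ m * ((avoidS m i j' (k - 1)).card : ℝ) := by
          rw [mul_right_comm, hKprod]
      _ ≤ (∏ c : Fin m, ((k : ℝ) - (j' c : ℝ))) * ((avoidS m i j' k).card : ℝ) := hBr
      _ = ((avoidS m i j' k).card : ℝ) * ∏ c : Fin m, ((k : ℝ) - (j' c : ℝ)) := by ring
  have final : (k.choose i : ℝ) * (K * ((avoidS m i j' (k - 1)).card : ℝ))
      ≤ (k.choose i : ℝ) * ((avoidS m i j' k).card : ℝ) :=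
    mul_le_mul_of_nonneg_left hKN (by positivity)
  linarith
end

section
/- Strict positivity of the expected belief in the true label: let k ≥ 1 and l ≥ 3 be integers and let p_1, p_2 ∈ (0, 1) be real numbers. Define E(k, l, p_1, p_2) = Σ_{h=0}^{k−1} Σ_{i=0}^{k−h−1} Σ_{(j_1,…,j_{l−2}) ∈ {0,…,k−h−1}^{l−2}} [ C(k, k−h) · ( C(k−h, i) · ∏_{a=1}^{l−2} C(k−h, j_a) − Σ_{b=1}^{min(i, j_1, …, j_{l−2})} (−1)^{b+1} · C(k−h, b) · C(k−h−b, i−b) · ∏_{c=1}^{l−2} C(k−h−b, j_c−b) ) ] · 2^{−k} · (p_1/(2^{l−2}−1))^{i} · (p_2/2^{l−2})^{k−h−i}. Then E(k, l, p_1, p_2) > 0. -/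
open Finset


/-- Number of `r`-subsets of `Fin n` containing a fixed set `T`. -/
lemma card_filter_superset_s9 {n : ℕ} (T : Finset (Fin n)) (r : ℕ) :
    (((Finset.univ : Finset (Fin n)).powersetCard r).filter (fun A => T ⊆ A)).card
      = if T.card ≤ r then (n - T.card).choose (r - T.card) else 0 := by
  split_ifs with h
  · have hcard : (Finset.univ \ T : Finset (Fin n)).card = n - T.card := by
      rw [Finset.card_sdiff_of_subset (Finset.subset_univ T), Finset.card_univ, Fintype.card_fin]
    rw [← hcard, ← Finset.card_powersetCard (r - T.card) (Finset.univ \ T)]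
    apply Finset.card_bij' (fun A _ => A \ T) (fun B _ => B ∪ T)
    · intro A hA
      rw [Finset.mem_filter, Finset.mem_powersetCard_univ] at hA
      rw [Finset.mem_powersetCard]
      exact ⟨Finset.sdiff_subset_sdiff (Finset.subset_univ A) le_rfl,
        by rw [Finset.card_sdiff_of_subset hA.2, hA.1]⟩
    · intro B hB
      rw [Finset.mem_powersetCard] at hB
      have hdisj : Disjoint B T := Finset.disjoint_of_subset_left hB.1 Finset.sdiff_disjoint
      rw [Finset.mem_filter, Finset.mem_powersetCard_univ]
      refine ⟨?_, Finset.subset_union_right⟩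
      rw [Finset.card_union_of_disjoint hdisj, hB.2]
      omega
    · intro A hA
      rw [Finset.mem_filter] at hA
      exact Finset.sdiff_union_of_subset hA.2
    · intro B hB
      rw [Finset.mem_powersetCard] at hB
      exact Finset.union_sdiff_cancel_right
        (Finset.disjoint_of_subset_left hB.1 Finset.sdiff_disjoint)
  · rw [Finset.card_eq_zero, Finset.filter_eq_empty_iff]
    intro A hA hTA
    rw [Finset.mem_powersetCard_univ] at hA
    exact h (hA ▸ Finset.card_le_card hTA)

lemma sum_ite_subset {n : ℕ} (T : Finset (Fin n)) (r : ℕ) :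
    (∑ A ∈ (Finset.univ : Finset (Fin n)).powersetCard r, if T ⊆ A then (1 : ℤ) else 0)
      = if T.card ≤ r then (((n - T.card).choose (r - T.card) : ℕ) : ℤ) else 0 := by
  rw [Finset.sum_boole, card_filter_superset_s9]
  split_ifs <;> simp

lemma alt_sum_nonneg (n i m : ℕ) (j : Fin m → ℕ) (hi : i ≤ n) :
    0 ≤ ∑ b ∈ Finset.range (Finset.fold min i j Finset.univ + 1),
          (-1 : ℤ) ^ b * (n.choose b : ℤ) * ((n - b).choose (i - b) : ℤ) *
            ∏ c, ((n - b).choose (j c - b) : ℤ) := by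
  classical
  set M := Finset.fold min i j Finset.univ with hM
  set g : ℕ → ℤ := fun b => (-1 : ℤ) ^ b *
      ((if b ≤ i then (((n - b).choose (i - b) : ℕ) : ℤ) else 0) *
        ∏ c, (if b ≤ j c then (((n - b).choose (j c - b) : ℕ) : ℤ) else 0)) with hg
  have key : ∑ b ∈ Finset.range (M + 1),
        (-1 : ℤ) ^ b * (n.choose b : ℤ) * ((n - b).choose (i - b) : ℤ) *
          ∏ c, ((n - b).choose (j c - b) : ℤ)
      = ∑ A ∈ (Finset.univ : Finset (Fin n)).powersetCard i,
          ∑ B ∈ Fintype.piFinset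
              (fun c : Fin m => (Finset.univ : Finset (Fin n)).powersetCard (j c)),
            if A ∩ Finset.univ.inf B = ∅ then (1 : ℤ) else 0 := by
    -- inclusion-exclusion per family
    have h1 : ∀ (A : Finset (Fin n)) (B : Fin m → Finset (Fin n)),
        (if A ∩ Finset.univ.inf B = ∅ then (1 : ℤ) else 0)
          = ∑ T ∈ (Finset.univ : Finset (Fin n)).powerset,
              if T ⊆ A ∧ ∀ c, T ⊆ B c then (-1 : ℤ) ^ T.card else 0 := by
      intro A B
      rw [← Finset.sum_powerset_neg_one_pow_card (x := A ∩ Finset.univ.inf B),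
        ← Finset.sum_filter]
      congr 1
      ext T
      simp only [Finset.mem_filter, Finset.mem_powerset, Finset.subset_univ, true_and,
        Finset.subset_inter_iff, ← Finset.le_eq_subset, Finset.le_inf_iff, Finset.mem_univ,
        forall_true_left, true_implies]
    -- per fixed T, the double sum factorizes
    have h2 : ∀ T : Finset (Fin n),
        (∑ A ∈ (Finset.univ : Finset (Fin n)).powersetCard i,
          ∑ B ∈ Fintype.piFinset
              (fun c : Fin m => (Finset.univ : Finset (Fin n)).powersetCard (j c)),
            if T ⊆ A ∧ ∀ c, T ⊆ B c then (-1 : ℤ) ^ T.card else 0)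
          = g T.card := by
      intro T
      have hsplit : ∀ (A : Finset (Fin n)) (B : Fin m → Finset (Fin n)),
          (if T ⊆ A ∧ ∀ c, T ⊆ B c then (-1 : ℤ) ^ T.card else 0)
            = ((if T ⊆ A then (1 : ℤ) else 0) * ∏ c, (if T ⊆ B c then (1 : ℤ) else 0))
                * (-1 : ℤ) ^ T.card := by
        intro A B
        rw [Fintype.prod_boole]
        by_cases hP : T ⊆ A <;> by_cases hQ : ∀ c, T ⊆ B c <;> simp [hP, hQ]
      simp only [hsplit, ← Finset.sum_mul]
      rw [← Finset.sum_mul_sum]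
      have hB : (∑ B ∈ Fintype.piFinset
            (fun c : Fin m => (Finset.univ : Finset (Fin n)).powersetCard (j c)),
            ∏ c, (if T ⊆ B c then (1 : ℤ) else 0))
          = ∏ c, (if T.card ≤ j c then (((n - T.card).choose (j c - T.card) : ℕ) : ℤ) else 0) := by
        exact Eq.trans (Finset.prod_univ_sum
          (fun c : Fin m => ((Finset.univ : Finset (Fin n)).powersetCard (j c)))
          (fun c A => if T ⊆ A then (1 : ℤ) else 0)).symm
          (Finset.prod_congr rfl fun c _ => sum_ite_subset T (j c))
      rw [hB, sum_ite_subset T i]; simp only [hg]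
      ring
    calc ∑ b ∈ Finset.range (M + 1),
          (-1 : ℤ) ^ b * (n.choose b : ℤ) * ((n - b).choose (i - b) : ℤ) *
            ∏ c, ((n - b).choose (j c - b) : ℤ)
        = ∑ b ∈ Finset.range (M + 1), (n.choose b : ℤ) * g b := by
          apply Finset.sum_congr rfl
          intro b hb
          rw [Finset.mem_range, Nat.lt_succ_iff] at hb
          obtain ⟨hbi, hbj⟩ := (Finset.le_fold_min _).mp (hM ▸ hb)
          simp only [hg]
          simp only [if_pos hbi]
          rw [Finset.prod_congr rfl fun c _ => if_pos (hbj c (Finset.mem_univ c))]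
          ring
      _ = ∑ b ∈ Finset.range (n + 1), (n.choose b : ℤ) * g b := by
          apply Finset.sum_subset
          · apply Finset.range_subset_range.mpr
            have : M ≤ i := (Finset.fold_min_le _).mpr (Or.inl le_rfl)
            omega
          · intro b hbn hbM
            rw [Finset.mem_range, Nat.lt_succ_iff] at hbn
            rw [Finset.mem_range, Nat.lt_succ_iff] at hbM
            have : ¬ (b ≤ i ∧ ∀ x ∈ Finset.univ, b ≤ j x) := fun hc =>
              hbM ((Finset.le_fold_min _).mpr hc)
            simp only [hg]
            by_cases hbi : b ≤ i
            · push_neg at this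
              obtain ⟨c, _, hc⟩ := this hbi
              have hzero : (∏ c' : Fin m,
                  (if b ≤ j c' then (((n - b).choose (j c' - b) : ℕ) : ℤ) else 0)) = 0 :=
                Finset.prod_eq_zero (Finset.mem_univ c) (if_neg (Nat.not_le.mpr hc))
              rw [hzero]
              ring
            · rw [if_neg hbi]; ring
      _ = ∑ T ∈ (Finset.univ : Finset (Fin n)).powerset, g T.card := by
          rw [Finset.sum_powerset_apply_card g (x := (Finset.univ : Finset (Fin n)))]
          rw [Finset.card_univ, Fintype.card_fin]
          simp [nsmul_eq_mul]
      _ = _ := by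
          simp only [← h2]
          rw [Finset.sum_comm]
          apply Finset.sum_congr rfl
          intro A _
          rw [Finset.sum_comm]
          exact Finset.sum_congr rfl fun B _ => (h1 A B).symm
  rw [key]
  apply Finset.sum_nonneg; intro A _; apply Finset.sum_nonneg; intro B _
  split_ifs <;> norm_num

lemma bracket_nonneg (n i m : ℕ) (j : Fin m → ℕ) (hi : i ≤ n) :
    (0 : ℝ) ≤ (n.choose i : ℝ) * (∏ a, (n.choose (j a) : ℝ)) -
      ∑ b ∈ Finset.Icc 1 (Finset.fold min i j Finset.univ),
        (-1 : ℝ) ^ (b + 1) * (n.choose b : ℝ) * ((n - b).choose (i - b) : ℝ) *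
          ∏ c, ((n - b).choose (j c - b) : ℝ) := by
  set M := Finset.fold min i j Finset.univ with hM
  have h := alt_sum_nonneg n i m j hi
  have hcast : (0 : ℝ) ≤ ∑ b ∈ Finset.range (M + 1),
      (-1 : ℝ) ^ b * (n.choose b : ℝ) * ((n - b).choose (i - b) : ℝ) *
        ∏ c, ((n - b).choose (j c - b) : ℝ) := by
    have := (@Int.cast_nonneg ℝ _ _) h
    push_cast at this
    convert this using 2
  have expand : ∑ b ∈ Finset.range (M + 1),
      (-1 : ℝ) ^ b * (n.choose b : ℝ) * ((n - b).choose (i - b) : ℝ) *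
        ∏ c, ((n - b).choose (j c - b) : ℝ)
      = (n.choose i : ℝ) * (∏ a, (n.choose (j a) : ℝ)) +
        ∑ b ∈ Finset.Icc 1 M,
          (-1 : ℝ) ^ b * (n.choose b : ℝ) * ((n - b).choose (i - b) : ℝ) *
            ∏ c, ((n - b).choose (j c - b) : ℝ) := by
    rw [Finset.range_eq_Ico, Finset.sum_eq_sum_Ico_succ_bot (Nat.succ_pos M),
      Nat.succ_eq_add_one, Finset.Ico_add_one_right_eq_Icc]
    congr 1
    simp
  have flip : ∑ b ∈ Finset.Icc 1 M,
      (-1 : ℝ) ^ (b + 1) * (n.choose b : ℝ) * ((n - b).choose (i - b) : ℝ) *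
        ∏ c, ((n - b).choose (j c - b) : ℝ)
      = - ∑ b ∈ Finset.Icc 1 M,
          (-1 : ℝ) ^ b * (n.choose b : ℝ) * ((n - b).choose (i - b) : ℝ) *
            ∏ c, ((n - b).choose (j c - b) : ℝ) := by
    rw [← Finset.sum_neg_distrib]
    exact Finset.sum_congr rfl fun b _ => by ring
  rw [flip]
  linarith [hcast, expand.symm.le, expand.le]

/-- Closed-form expression for the conditional expected belief
`E[bel^{m̂}({ỹ}) | X = x̃]` in the hidden true label `ỹ` of an instance with `k`
neighbors, under the label-noise model of Assumption 1 with weights `p₁, p₂`. -/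
noncomputable def expectedBeliefTrue (k l : ℕ) (p₁ p₂ : ℝ) : ℝ :=
  ∑ h ∈ Finset.range k, ∑ i ∈ Finset.range (k - h),
    ∑ j ∈ Fintype.piFinset (fun _ : Fin (l - 2) => Finset.range (k - h)),
      (k.choose (k - h) : ℝ) *
        (((k - h).choose i : ℝ) * (∏ a, ((k - h).choose (j a) : ℝ)) -
          ∑ b ∈ Finset.Icc 1 (Finset.fold min i j Finset.univ),
            (-1 : ℝ) ^ (b + 1) * ((k - h).choose b : ℝ) *
              ((k - h - b).choose (i - b) : ℝ) *
              ∏ c, ((k - h - b).choose (j c - b) : ℝ)) *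
        ((2 : ℝ) ^ k)⁻¹ * (p₁ / ((2 : ℝ) ^ (l - 2) - 1)) ^ i *
        (p₂ / (2 : ℝ) ^ (l - 2)) ^ (k - h - i)

/-- Strict positivity of the expected belief in the true label: for `k ≥ 1`, `l ≥ 3`, and
`p₁, p₂ ∈ (0, 1)`, we have `E(k, l, p₁, p₂) > 0`. -/
theorem expectedBeliefTrue_pos (k l : ℕ) (p₁ p₂ : ℝ)
    (hk : 1 ≤ k) (hl : 3 ≤ l)
    (hp₁ : p₁ ∈ Set.Ioo (0 : ℝ) 1) (hp₂ : p₂ ∈ Set.Ioo (0 : ℝ) 1) :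
    0 < expectedBeliefTrue k l p₁ p₂ := by
  obtain ⟨hp₁0, _⟩ := hp₁
  obtain ⟨hp₂0, _⟩ := hp₂
  have h2l : (2 : ℝ) ≤ 2 ^ (l - 2) := by
    calc (2 : ℝ) = 2 ^ 1 := (pow_one 2).symm
    _ ≤ 2 ^ (l - 2) := pow_le_pow_right₀ one_le_two (by omega)
  have hq1 : 0 < p₁ / ((2 : ℝ) ^ (l - 2) - 1) := div_pos hp₁0 (by linarith)
  have hq2 : 0 < p₂ / (2 : ℝ) ^ (l - 2) := div_pos hp₂0 (by positivity)
  -- every summand is nonnegative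
  have term_nonneg : ∀ h ∈ Finset.range k, ∀ i ∈ Finset.range (k - h),
      ∀ j ∈ Fintype.piFinset (fun _ : Fin (l - 2) => Finset.range (k - h)),
      (0 : ℝ) ≤ (k.choose (k - h) : ℝ) *
        (((k - h).choose i : ℝ) * (∏ a, ((k - h).choose (j a) : ℝ)) -
          ∑ b ∈ Finset.Icc 1 (Finset.fold min i j Finset.univ),
            (-1 : ℝ) ^ (b + 1) * ((k - h).choose b : ℝ) *
              ((k - h - b).choose (i - b) : ℝ) *
              ∏ c, ((k - h - b).choose (j c - b) : ℝ)) *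
        ((2 : ℝ) ^ k)⁻¹ * (p₁ / ((2 : ℝ) ^ (l - 2) - 1)) ^ i *
        (p₂ / (2 : ℝ) ^ (l - 2)) ^ (k - h - i) := by
    intro h _ i hi j _
    have hbr := bracket_nonneg (k - h) i (l - 2) j (Finset.mem_range.mp hi).le
    have h1 : (0 : ℝ) ≤ (k.choose (k - h) : ℝ) := Nat.cast_nonneg _
    have h2 : (0 : ℝ) ≤ ((2 : ℝ) ^ k)⁻¹ := by positivity
    have h3 : (0 : ℝ) ≤ (p₁ / ((2 : ℝ) ^ (l - 2) - 1)) ^ i := le_of_lt (pow_pos hq1 i)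
    have h4 : (0 : ℝ) ≤ (p₂ / (2 : ℝ) ^ (l - 2)) ^ (k - h - i) := le_of_lt (pow_pos hq2 _)
    exact mul_nonneg (mul_nonneg (mul_nonneg (mul_nonneg h1 hbr) h2) h3) h4
  unfold expectedBeliefTrue
  apply Finset.sum_pos'
  · intro h hh
    exact Finset.sum_nonneg fun i hi => Finset.sum_nonneg fun j hj =>
      term_nonneg h hh i hi j hj
  refine ⟨k - 1, Finset.mem_range.mpr (by omega), ?_⟩
  have hkh : k - (k - 1) = 1 := by omega
  rw [hkh]
  apply Finset.sum_pos'
  · intro i hi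
    apply Finset.sum_nonneg
    intro j hj
    have := term_nonneg (k - 1) (Finset.mem_range.mpr (by omega)) i (by rw [hkh]; exact hi)
      j (by rw [hkh]; exact hj)
    rw [hkh] at this
    exact this
  refine ⟨0, Finset.mem_range.mpr one_pos, ?_⟩
  apply Finset.sum_pos'
  · intro j hj
    have := term_nonneg (k - 1) (Finset.mem_range.mpr (by omega)) 0
      (by rw [hkh]; exact Finset.mem_range.mpr one_pos) j (by rw [hkh]; exact hj)
    rw [hkh] at this
    exact this
  refine ⟨fun _ => 0, by simp, ?_⟩
  have hfold : Finset.fold min 0 (fun _ : Fin (l - 2) => 0) Finset.univ = 0 :=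
    Nat.le_zero.mp ((Finset.fold_min_le _).mpr (Or.inl le_rfl))
  rw [hfold]
  simp only [Finset.Icc_eq_empty_of_lt (Nat.lt_irrefl 0 |> fun _ => Nat.zero_lt_one),
    Finset.sum_empty]
  simp only [Nat.choose_zero_right, Nat.choose_one_right, Nat.cast_one, Nat.cast_ofNat,
    Finset.prod_const_one, pow_zero, Nat.sub_zero, pow_one, mul_one, Nat.cast_id]
  have hkpos : (0 : ℝ) < k := by exact_mod_cast hk
  have : (1 : ℝ) * 1 - 0 = 1 := by ring
  positivity
end
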